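/- Let L : ℝ × ℝ → ℝ admit a partial derivative ∂₂L in its second argument, let F : ℝ^q → ℝ be differentiable with gradient ∇F, let η > 0, let I ⊆ [m], let y ∈ ℝ^m, and let X ∈ ℝ^{m×n} have rows x₁ᵀ,…,x_mᵀ. Define the one-step gradient update map T(y, X, W₁) = W₁ − η Σ_{i∈I} ∂₂L(y_i, F(W₁ᵀx_i)) · x_i (∇F(W₁ᵀx_i))ᵀ for W₁ ∈ ℝ^{n×q}. Then for every orthogonal matrix U ∈ ℝ^{n×n} and every W₁ ∈ ℝ^{n×q}, it holds that T(y, XU, W₁) = Uᵀ T(y, X, UW₁). -/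
import Mathlib


open MeasureTheory Matrix

/-- One-step (stochastic) gradient-descent update of the first-layer weight matrix
`W₁ ∈ ℝ^{n×q}` of a network `f_{W₁}(x) = F(W₁ᵀx)` for the loss `Σ_{i∈I} L(y_i, F(W₁ᵀx_i))`
with learning rate `η`, mini-batch `I`, partial derivative `dL = ∂₂L` and gradient
`gradF = ∇F`:
`T(y, X, W₁) = W₁ − η Σ_{i∈I} ∂₂L(y_i, F(W₁ᵀx_i)) · x_i (∇F(W₁ᵀx_i))ᵀ`,
where `x_i` is the `i`-th row of `X`. -/
noncomputable def sgdStep {m n q : ℕ} (η : ℝ) (I : Finset (Fin m))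
    (dL : ℝ → ℝ → ℝ) (F : (Fin q → ℝ) → ℝ) (gradF : (Fin q → ℝ) → Fin q → ℝ)
    (y : Fin m → ℝ) (X : Fin m → Fin n → ℝ) (W : Matrix (Fin n) (Fin q) ℝ) :
    Matrix (Fin n) (Fin q) ℝ :=
  W - η • ∑ i ∈ I,
    dL (y i) (F (Wᵀ.mulVec (X i))) • Matrix.vecMulVec (X i) (gradF (Wᵀ.mulVec (X i)))

/-- deterministic equivariance identity, eq. (rot-W1) in the proof of
Proposition 3.1: for every orthogonal `U ∈ ℝ^{n×n}`, `T(y, XU, W₁) = Uᵀ T(y, X, UW₁)`.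
The rows of `XU` are `Uᵀx_i`, i.e. `x_i ᵥ* U`. -/
theorem stmt3 {m n q : ℕ} (η : ℝ) (hη : 0 < η) (I : Finset (Fin m))
    (L : ℝ → ℝ → ℝ) (dL : ℝ → ℝ → ℝ)
    (hdL : ∀ a v : ℝ, HasDerivAt (fun b => L a b) (dL a v) v)
    (F : (Fin q → ℝ) → ℝ) (gradF : (Fin q → ℝ) → Fin q → ℝ)
    (hF : ∀ x : Fin q → ℝ, HasFDerivAt F
      (LinearMap.toContinuousLinearMap
        (∑ j, gradF x j • (LinearMap.proj j : (Fin q → ℝ) →ₗ[ℝ] ℝ))) x)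
    (y : Fin m → ℝ) (X : Fin m → Fin n → ℝ)
    (U : Matrix (Fin n) (Fin n) ℝ) (hU : Uᵀ * U = 1) (hU' : U * Uᵀ = 1)
    (W : Matrix (Fin n) (Fin q) ℝ) :
    sgdStep η I dL F gradF y (fun i => Matrix.vecMul (X i) U) W
      = Uᵀ * sgdStep η I dL F gradF y X (U * W) := by
  have harg : ∀ i : Fin m, (U * W)ᵀ.mulVec (X i) = Wᵀ.mulVec (Matrix.vecMul (X i) U) := by
    intro i
    rw [Matrix.transpose_mul, ← Matrix.mulVec_mulVec, Matrix.mulVec_transpose U]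
  unfold sgdStep
  simp only [harg]
  rw [Matrix.mul_sub, Matrix.mul_smul, ← Matrix.mul_assoc, hU, Matrix.one_mul]
  congr 2
  rw [Matrix.mul_sum]
  apply Finset.sum_congr rfl
  intro i _
  rw [Matrix.mul_smul]
  congr 1
  ext a b
  simp only [Matrix.mul_apply, Matrix.vecMulVec_apply, Matrix.vecMul, dotProduct,
    Matrix.transpose_apply, Finset.sum_mul]
  ring_nf
  exact Finset.sum_congr rfl fun j _ => by ring
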